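/- Let X₁, ..., X_{m+n} be random variables with X_i ~ N(μ_i, σ_i²), and suppose the random vector (X₁, ..., X_{m+n}) is distributed as (F_{X₁}^{-1}(U), ..., F_{X_m}^{-1}(U), F_{X_{m+1}}^{-1}(1−U), ..., F_{X_{m+n}}^{-1}(1−U)) for a single random variable U uniformly distributed on [0,1]. Let S = Σ_{i=1}^{m+n} X_i and let g be any distortion function with dual ḡ. If Σ_{i=1}^{m} σ_i ≥ Σ_{i=m+1}^{m+n} σ_i, then ρ_g[S] = Σ_{i=1}^{m} ρ_g[X_i] + Σ_{i=m+1}^{m+n} ρ_{ḡ}[X_i]; if Σ_{i=1}^{m} σ_i < Σ_{i=m+1}^{m+n} σ_i, then ρ_g[S] = Σ_{i=1}^{m} ρ_{ḡ}[X_i] + Σ_{i=m+1}^{m+n} ρ_g[X_i]. -/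

import Mathlib

open MeasureTheory ProbabilityTheory Set

noncomputable section

variable {Ω : Type*} [MeasurableSpace Ω]

/-- The cumulative distribution function of the random variable `X` under `P`. -/
def rvCdf (P : Measure Ω) (X : Ω → ℝ) : ℝ → ℝ := fun x => (P {ω | X ω ≤ x}).toReal

/-- The survival function `x ↦ P(X > x)`. -/
def rvSurv (P : Measure Ω) (X : Ω → ℝ) : ℝ → ℝ := fun x => (P {ω | x < X ω}).toReal

/-- The left inverse `F⁻¹(p) = inf {x | F x ≥ p}` of a cdf `F`. -/
def leftInv (F : ℝ → ℝ) (p : ℝ) : ℝ := sInf {x | p ≤ F x}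

/-- The right inverse `F⁻¹⁺(p) = sup {x | F x ≤ p}` of a cdf `F`. -/
def rightInv (F : ℝ → ℝ) (p : ℝ) : ℝ := sSup {x | F x ≤ p}

/-- `g : [0,1] → [0,1]` is a distortion function: nondecreasing with `g 0 = 0`, `g 1 = 1`. -/
def IsDistortion (g : ℝ → ℝ) : Prop :=
  MonotoneOn g (Icc 0 1) ∧ g 0 = 0 ∧ g 1 = 1 ∧ ∀ q ∈ Icc (0:ℝ) 1, g q ∈ Icc (0:ℝ) 1

/-- The dual distortion function `ḡ(q) = 1 - g(1 - q)`. -/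
def dualDistortion (g : ℝ → ℝ) : ℝ → ℝ := fun q => 1 - g (1 - q)

/-- The distortion risk measure
`ρ_g[X] = -∫_{-∞}^0 (1 - g(P(X > x))) dx + ∫_0^∞ g(P(X > x)) dx`. -/
def rho (P : Measure Ω) (g : ℝ → ℝ) (X : Ω → ℝ) : ℝ :=
  (- ∫ x in Iio (0:ℝ), (1 - g (rvSurv P X x))) + ∫ x in Ioi (0:ℝ), g (rvSurv P X x)

/-- The two integrals defining the distortion risk measure `ρ_g[X]` are finite. -/
def RhoFinite (P : Measure Ω) (g : ℝ → ℝ) (X : Ω → ℝ) : Prop :=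
  IntegrableOn (fun x => 1 - g (rvSurv P X x)) (Iio (0:ℝ)) volume ∧
  IntegrableOn (fun x => g (rvSurv P X x)) (Ioi (0:ℝ)) volume

/-- `U` is uniformly distributed on `[0,1]`. -/
def IsUniform01 (P : Measure Ω) (U : Ω → ℝ) : Prop :=
  Measurable U ∧ Measure.map U P = volume.restrict (Icc (0:ℝ) 1)

/-- The counter-monotonic sum `S⁻ = F_{X₁}⁻¹(U) + F_{X₂}⁻¹(1 - U)`. -/
def cmSum (P : Measure Ω) (X₁ X₂ : Ω → ℝ) (U : Ω → ℝ) : Ω → ℝ :=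
  fun ω => leftInv (rvCdf P X₁) (U ω) + leftInv (rvCdf P X₂) (1 - U ω)

/-- `X` is symmetric: for some `m`, `P(X ≤ m - x) = P(X ≥ m + x)` for all `x`. -/
def IsSymmetricRV (P : Measure Ω) (X : Ω → ℝ) : Prop :=
  ∃ m : ℝ, ∀ x : ℝ, P {ω | X ω ≤ m - x} = P {ω | m + x ≤ X ω}

/-- Dispersive order `X ≤_disp Y`. -/
def DispLE (P : Measure Ω) (X Y : Ω → ℝ) : Prop :=
  ∀ u v : ℝ, 0 < v → v ≤ u → u < 1 →
    leftInv (rvCdf P X) u - leftInv (rvCdf P X) v ≤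
      leftInv (rvCdf P Y) u - leftInv (rvCdf P Y) v

/-- The cdf of `X` is continuous and strictly increasing on `(F⁻¹⁺(0), F⁻¹(1))`. -/
def CdfRegular (P : Measure Ω) (X : Ω → ℝ) : Prop :=
  ContinuousOn (rvCdf P X) (Ioo (rightInv (rvCdf P X) 0) (leftInv (rvCdf P X) 1)) ∧
  StrictMonoOn (rvCdf P X) (Ioo (rightInv (rvCdf P X) 0) (leftInv (rvCdf P X) 1))

/-- Value-at-Risk `VaR_p[X] = F_X⁻¹(p)`. -/
def VaR (P : Measure Ω) (X : Ω → ℝ) (p : ℝ) : ℝ := leftInv (rvCdf P X) p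

/-- Tail-Value-at-Risk `TVaR_p[X] = (1/(1-p)) ∫_p^1 F_X⁻¹(q) dq`. -/
def TVaR (P : Measure Ω) (X : Ω → ℝ) (p : ℝ) : ℝ :=
  (1 - p)⁻¹ * ∫ q in p..1, leftInv (rvCdf P X) q

/-- Left-Tail-Value-at-Risk `LTVaR_p[X] = (1/p) ∫_0^p F_X⁻¹(q) dq`. -/
def LTVaR (P : Measure Ω) (X : Ω → ℝ) (p : ℝ) : ℝ :=
  p⁻¹ * ∫ q in (0:ℝ)..p, leftInv (rvCdf P X) q

/-- The standard normal cdf `Φ`. -/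
def stdNormCdf : ℝ → ℝ := fun x => ((gaussianReal 0 1) (Iic x)).toReal

/-- The inverse `Φ⁻¹` of the standard normal cdf. -/
def stdNormInv : ℝ → ℝ := fun p => sInf {x | p ≤ stdNormCdf x}

/-- The Wang transform distortion function at level `p`. -/
def wangG (p : ℝ) : ℝ → ℝ := fun q => stdNormCdf (stdNormInv q + stdNormInv p)

/-- The Wang transform risk measure at level `p`. -/
def WT (P : Measure Ω) (X : Ω → ℝ) (p : ℝ) : ℝ := rho P (wangG p) X

/-- `X ~ N(μ, σ²)`. -/
def IsNormalRV (P : Measure Ω) (X : Ω → ℝ) (μ σ : ℝ) : Prop :=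
  Measurable X ∧ Measure.map X P = gaussianReal μ (⟨σ ^ 2, sq_nonneg σ⟩ : NNReal)

/-- `X ~ LN(μ, σ²)`, i.e. `X` is distributed as `exp Z` with `Z ~ N(μ, σ²)`. -/
def IsLogNormalRV (P : Measure Ω) (X : Ω → ℝ) (μ σ : ℝ) : Prop :=
  Measurable X ∧
    Measure.map X P = Measure.map Real.exp (gaussianReal μ (⟨σ ^ 2, sq_nonneg σ⟩ : NNReal))

/-- `X ~ Student(ν)`: density proportional to `(1 + x²/ν)^(-(ν+1)/2)`. -/
def IsStudentRV (P : Measure Ω) (X : Ω → ℝ) (ν : ℝ) : Prop :=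
  Measurable X ∧ ∃ c : ℝ, 0 < c ∧
    Measure.map X P =
      volume.withDensity (fun x => ENNReal.ofReal (c * (1 + x ^ 2 / ν) ^ (-((ν + 1) / 2))))

/-- Extension of a distortion function to `ℝ` by constants. -/
def gExt (g : ℝ → ℝ) : ℝ → ℝ := fun q => if q ≤ 0 then 0 else if 1 ≤ q then 1 else g q

open Classical in
/-- The Lebesgue–Stieltjes measure `dg` associated with (the right-continuous modification of)
the extension of a distortion function `g` to `ℝ`. -/
def lsMeasure (g : ℝ → ℝ) : Measure ℝ :=
  if h : Monotone (gExt g) then h.stieltjesFunction.measure else 0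


/-! ### Auxiliary development -/

section Aux

open Filter Real

lemma gauss_apply (s : Set ℝ) :
    gaussianReal 0 1 s = ∫⁻ x in s, gaussianPDF 0 1 x := gaussianReal_apply 0 one_ne_zero s

lemma gauss_singleton (a : ℝ) : gaussianReal 0 1 {a} = 0 := by
  rw [gauss_apply, Measure.restrict_eq_zero.mpr (by simp), lintegral_zero_measure]

lemma gauss_pos {s : Set ℝ} (h : volume s ≠ 0) : 0 < gaussianReal 0 1 s := by
  rw [gauss_apply, pos_iff_ne_zero]
  intro h0
  rw [lintegral_eq_zero_iff (measurable_gaussianPDF 0 1)] at h0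
  have h1 : (volume.restrict s) {x | ¬ gaussianPDF 0 1 x = (0 : ℝ → ENNReal) x} = 0 := ae_iff.mp h0
  have h2 : {x | ¬ gaussianPDF 0 1 x = (0 : ℝ → ENNReal) x} = Set.univ := by
    ext x
    simp only [Set.mem_setOf_eq, Set.mem_univ, iff_true, Pi.zero_apply]
    exact (gaussianPDF_pos 0 one_ne_zero x).ne'
  rw [h2, Measure.restrict_apply_univ] at h1
  exact h h1

lemma Phi_eq_cdf (x : ℝ) : stdNormCdf x = cdf (gaussianReal 0 1) x :=
  (cdf_eq_real _ x).symm

lemma Phi_mono : Monotone stdNormCdf := by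
  intro x y hxy
  simp only [Phi_eq_cdf]
  exact monotone_cdf _ hxy

lemma Phi_tendsto_atTop : Tendsto stdNormCdf atTop (nhds 1) := by
  have h := tendsto_cdf_atTop (μ := gaussianReal 0 1)
  have he : stdNormCdf = fun x => cdf (gaussianReal 0 1) x := funext Phi_eq_cdf
  rw [he]; exact h

lemma Phi_tendsto_atBot : Tendsto stdNormCdf atBot (nhds 0) := by
  have h := tendsto_cdf_atBot (μ := gaussianReal 0 1)
  have he : stdNormCdf = fun x => cdf (gaussianReal 0 1) x := funext Phi_eq_cdf
  rw [he]; exact h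

lemma Phi_pos (x : ℝ) : 0 < stdNormCdf x := by
  have h : (0:ENNReal) < gaussianReal 0 1 (Iic x) := gauss_pos (by simp [Real.volume_Iic])
  exact ENNReal.toReal_pos h.ne' (measure_ne_top _ _)

lemma Phi_nonneg (x : ℝ) : 0 ≤ stdNormCdf x := (Phi_pos x).le

lemma Phi_lt_one (x : ℝ) : stdNormCdf x < 1 := by
  have h1 : gaussianReal 0 1 (Iic x) < 1 := by
    have hcompl : gaussianReal 0 1 (Ioi x) > 0 := gauss_pos (by simp [Real.volume_Ioi])
    have : gaussianReal 0 1 (Iic x) = 1 - gaussianReal 0 1 (Ioi x) := by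
      have := prob_compl_eq_one_sub (μ := gaussianReal 0 1) (measurableSet_Ioi (a := x))
      rwa [compl_Ioi] at this
    rw [this]
    exact ENNReal.sub_lt_self ENNReal.one_ne_top one_ne_zero hcompl.ne'
  have := ENNReal.toReal_lt_toReal (measure_ne_top _ _) ENNReal.one_ne_top |>.mpr h1
  simpa [stdNormCdf] using this

lemma Phi_le_one (x : ℝ) : stdNormCdf x ≤ 1 := (Phi_lt_one x).le

lemma Phi_strictMono : StrictMono stdNormCdf := by
  intro x y hxy
  have hsplit : gaussianReal 0 1 (Iic y) = gaussianReal 0 1 (Iic x) + gaussianReal 0 1 (Ioc x y) := by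
    rw [← measure_union (Iic_disjoint_Ioc le_rfl) measurableSet_Ioc, Iic_union_Ioc_eq_Iic hxy.le]
  have hpos : gaussianReal 0 1 (Ioc x y) ≠ 0 := by
    refine (gauss_pos ?_).ne'
    simp [Real.volume_Ioc, hxy, sub_pos.mpr hxy]
  have hlt : gaussianReal 0 1 (Iic x) < gaussianReal 0 1 (Iic y) := by
    rw [hsplit]
    exact ENNReal.lt_add_right (measure_ne_top _ _) hpos
  exact ENNReal.toReal_lt_toReal (measure_ne_top _ _) (measure_ne_top _ _) |>.mpr hlt

lemma Phi_lipschitz_aux {x y : ℝ} (hxy : x ≤ y) :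
    stdNormCdf y - stdNormCdf x ≤ (Real.sqrt (2 * π))⁻¹ * (y - x) := by
  set C : ℝ := (Real.sqrt (2 * π))⁻¹ with hC
  have hC0 : 0 ≤ C := by positivity
  have hsplit : gaussianReal 0 1 (Iic y) = gaussianReal 0 1 (Iic x) + gaussianReal 0 1 (Ioc x y) := by
    rw [← measure_union (Iic_disjoint_Ioc le_rfl) measurableSet_Ioc, Iic_union_Ioc_eq_Iic hxy]
  have hdiff : stdNormCdf y - stdNormCdf x = (gaussianReal 0 1 (Ioc x y)).toReal := by
    simp only [stdNormCdf, hsplit, ENNReal.toReal_add (measure_ne_top _ _) (measure_ne_top _ _)]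
    ring
  have hbound : gaussianReal 0 1 (Ioc x y) ≤ ENNReal.ofReal (C * (y - x)) := by
    rw [gauss_apply]
    have hpdf : ∀ z, gaussianPDF 0 1 z ≤ ENNReal.ofReal C := by
      intro z
      rw [gaussianPDF]
      refine ENNReal.ofReal_le_ofReal ?_
      rw [gaussianPDFReal]
      simp only [NNReal.coe_one, mul_one, sub_zero]
      calc (Real.sqrt (2 * π))⁻¹ * Real.exp (-z ^ 2 / 2) ≤ (Real.sqrt (2 * π))⁻¹ * 1 := by
            gcongr
            exact Real.exp_le_one_iff.mpr (by nlinarith [sq_nonneg z])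
        _ = C := by rw [mul_one]
    calc ∫⁻ z in Ioc x y, gaussianPDF 0 1 z ≤ ∫⁻ _ in Ioc x y, ENNReal.ofReal C := by
          exact lintegral_mono fun z => hpdf z
      _ = ENNReal.ofReal C * volume (Ioc x y) := by rw [setLIntegral_const]
      _ = ENNReal.ofReal C * ENNReal.ofReal (y - x) := by rw [Real.volume_Ioc]
      _ = ENNReal.ofReal (C * (y - x)) := by
          rw [← ENNReal.ofReal_mul hC0]
  rw [hdiff]
  calc (gaussianReal 0 1 (Ioc x y)).toReal ≤ (ENNReal.ofReal (C * (y - x))).toReal :=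
        ENNReal.toReal_mono ENNReal.ofReal_ne_top hbound
    _ = C * (y - x) := ENNReal.toReal_ofReal (by nlinarith)

lemma Phi_continuous : Continuous stdNormCdf := by
  set C : ℝ := (Real.sqrt (2 * π))⁻¹ with hC
  have hC0 : 0 ≤ C := by positivity
  have : LipschitzWith (Real.toNNReal C) stdNormCdf := by
    refine LipschitzWith.of_dist_le_mul fun x y => ?_
    rw [Real.dist_eq, Real.dist_eq, Real.coe_toNNReal _ hC0]
    rcases le_total x y with h | h
    · rw [abs_of_nonpos (by simp [sub_nonpos, Phi_mono h]), abs_of_nonpos (by linarith)]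
      have := Phi_lipschitz_aux h
      nlinarith
    · rw [abs_of_nonneg (by simp [sub_nonneg, Phi_mono h]), abs_of_nonneg (by linarith)]
      exact Phi_lipschitz_aux h
  exact this.continuous

lemma Phi_neg (x : ℝ) : stdNormCdf (-x) = 1 - stdNormCdf x := by
  have hmap : Measure.map (fun y : ℝ => (-1 : ℝ) * y) (gaussianReal 0 1) = gaussianReal 0 1 := by
    rw [gaussianReal_map_const_mul]
    norm_num
  have h1 : gaussianReal 0 1 (Iic (-x)) = gaussianReal 0 1 (Ici x) := by
    conv_rhs => rw [← hmap]
    rw [Measure.map_apply (by fun_prop : Measurable fun y : ℝ => (-1:ℝ) * y) measurableSet_Ici]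
    congr 1
    ext y
    simp only [Set.mem_preimage, Set.mem_Ici, Set.mem_Iic]
    constructor <;> intro h <;> nlinarith
  have h2 : gaussianReal 0 1 (Ici x) = gaussianReal 0 1 (Ioi x) :=
    (measure_congr (Ioi_ae_eq_Ici' (gauss_singleton x)).symm)
  have h3 : gaussianReal 0 1 (Ioi x) = 1 - gaussianReal 0 1 (Iic x) := by
    have := prob_compl_eq_one_sub (μ := gaussianReal 0 1) (measurableSet_Iic (a := x))
    rwa [compl_Iic] at this
  rw [stdNormCdf]
  rw [h1, h2, h3, ENNReal.toReal_sub_of_le prob_le_one ENNReal.one_ne_top]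
  simp [stdNormCdf]

end Aux

section Aux2

open Filter Real

lemma q_exists {p : ℝ} (hp : p ∈ Ioo (0:ℝ) 1) : ∃ a, stdNormCdf a = p := by
  obtain ⟨x₀, hx₀⟩ : ∃ x, stdNormCdf x < p :=
    (Phi_tendsto_atBot.eventually_lt_const hp.1).exists
  obtain ⟨x₁, hx₁⟩ : ∃ x, p < stdNormCdf x :=
    (Phi_tendsto_atTop.eventually_const_lt hp.2).exists
  have hle : x₀ ≤ x₁ := by
    by_contra h
    push_neg at h
    exact absurd (Phi_mono h.le) (by linarith)
  have hmem : p ∈ Icc (stdNormCdf x₀) (stdNormCdf x₁) := ⟨hx₀.le, hx₁.le⟩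
  obtain ⟨a, _, ha⟩ := intermediate_value_Icc hle Phi_continuous.continuousOn hmem
  exact ⟨a, ha⟩

lemma q_spec {p : ℝ} (hp : p ∈ Ioo (0:ℝ) 1) :
    stdNormCdf (stdNormInv p) = p ∧ {x | p ≤ stdNormCdf x} = Ici (stdNormInv p) ∧
      {x | stdNormCdf x ≤ p} = Iic (stdNormInv p) := by
  obtain ⟨a, ha⟩ := q_exists hp
  have hIci : {x | p ≤ stdNormCdf x} = Ici a := by
    ext x
    simp only [mem_setOf_eq, mem_Ici]
    constructor
    · intro h
      by_contra hlt
      push_neg at hlt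
      exact absurd (Phi_strictMono hlt) (by rw [ha]; linarith)
    · intro h
      rw [← ha]
      exact Phi_mono h
  have hq : stdNormInv p = a := by rw [stdNormInv, hIci]; exact csInf_Ici
  refine ⟨by rw [hq, ha], by rw [hq]; exact hIci, ?_⟩
  rw [hq]
  ext x
  simp only [mem_setOf_eq, mem_Iic]
  constructor
  · intro h
    by_contra hlt
    push_neg at hlt
    exact absurd (Phi_strictMono hlt) (by rw [ha]; linarith)
  · intro h
    rw [← ha]
    exact Phi_mono h

lemma q_le_iff {p : ℝ} (hp : p ∈ Ioo (0:ℝ) 1) (x : ℝ) :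
    stdNormInv p ≤ x ↔ p ≤ stdNormCdf x := by
  have h := (q_spec hp).2.1
  constructor
  · intro hx
    have : x ∈ Ici (stdNormInv p) := hx
    rw [← h] at this
    exact this
  · intro hx
    have : x ∈ {x | p ≤ stdNormCdf x} := hx
    rw [h] at this
    exact this

lemma q_phi {p : ℝ} (hp : p ∈ Ioo (0:ℝ) 1) : stdNormCdf (stdNormInv p) = p := (q_spec hp).1

lemma q_neg {p : ℝ} (hp : p ∈ Ioo (0:ℝ) 1) : stdNormInv (1 - p) = - stdNormInv p := by
  have hp' : (1 - p) ∈ Ioo (0:ℝ) 1 := ⟨by linarith [hp.2], by linarith [hp.1]⟩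
  have h1 : stdNormCdf (stdNormInv (1 - p)) = 1 - p := q_phi hp'
  have h2 : stdNormCdf (- stdNormInv p) = 1 - p := by
    rw [Phi_neg, q_phi hp]
  exact Phi_strictMono.injective (h1.trans h2.symm)

lemma q_zero_of_nonpos {p : ℝ} (hp : p ≤ 0) : stdNormInv p = 0 := by
  have h : {x | p ≤ stdNormCdf x} = Set.univ := by
    ext x; simp only [mem_setOf_eq, mem_univ, iff_true]
    exact hp.trans (Phi_pos x).le
  rw [stdNormInv, h]
  exact Real.sInf_of_not_bddBelow (by
    intro ⟨b, hb⟩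
    exact absurd (hb (mem_univ (b - 1))) (by simp))

lemma q_zero_of_one_le {p : ℝ} (hp : 1 ≤ p) : stdNormInv p = 0 := by
  have h : {x | p ≤ stdNormCdf x} = (∅ : Set ℝ) := by
    ext x; simp only [mem_setOf_eq, mem_empty_iff_false, iff_false, not_le]
    exact (Phi_lt_one x).trans_le hp
  rw [stdNormInv, h]
  exact Real.sInf_empty

lemma q_preimage_Iic (t : ℝ) :
    stdNormInv ⁻¹' Iic t =
      (Ioo 0 1 ∩ Iic (stdNormCdf t)) ∪ (if (0:ℝ) ≤ t then (Ioo (0:ℝ) 1)ᶜ else ∅) := by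
  ext p
  simp only [mem_preimage, mem_Iic, mem_union, mem_inter_iff, mem_Ioo]
  by_cases hp : p ∈ Ioo (0:ℝ) 1
  · have hiff : stdNormInv p ≤ t ↔ p ≤ stdNormCdf t := q_le_iff hp t
    by_cases ht : (0:ℝ) ≤ t <;> simp_all [mem_Ioo, hp.1, hp.2]
  · have h0 : stdNormInv p = 0 := by
      rcases lt_or_ge 0 p with h | h
      · have : 1 ≤ p := by
          by_contra hc
          exact hp ⟨h, lt_of_not_ge hc⟩
        exact q_zero_of_one_le this
      · exact q_zero_of_nonpos h
    by_cases ht : (0:ℝ) ≤ t <;> simp_all [mem_Ioo, mem_compl_iff]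

lemma q_measurable : Measurable stdNormInv := by
  refine measurable_of_Iic fun t => ?_
  rw [q_preimage_Iic]
  by_cases ht : (0:ℝ) ≤ t <;> simp only [ht, if_true, if_false] <;> measurability

lemma map_q_uniform :
    Measure.map stdNormInv (volume.restrict (Icc (0:ℝ) 1)) = gaussianReal 0 1 := by
  have hfin : IsFiniteMeasure (Measure.map stdNormInv (volume.restrict (Icc (0:ℝ) 1))) := by
    constructor
    rw [Measure.map_apply q_measurable MeasurableSet.univ]
    simp only [preimage_univ]
    rw [Measure.restrict_apply_univ]
    simp [Real.volume_Icc]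
  refine Measure.ext_of_Iic _ _ fun t => ?_
  rw [Measure.map_apply q_measurable measurableSet_Iic, Measure.restrict_apply' measurableSet_Icc]
  rw [q_preimage_Iic]
  have hphi : stdNormCdf t ∈ Ioo (0:ℝ) 1 := ⟨Phi_pos t, Phi_lt_one t⟩
  have hkey : (Ioo 0 1 ∩ Iic (stdNormCdf t)) = Ioc (0:ℝ) (stdNormCdf t) := by
    ext p
    simp only [mem_inter_iff, mem_Ioo, mem_Iic, mem_Ioc]
    constructor
    · rintro ⟨⟨h1, _⟩, h3⟩; exact ⟨h1, h3⟩
    · rintro ⟨h1, h2⟩; exact ⟨⟨h1, h2.trans_lt hphi.2⟩, h2⟩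
  have hrhs : gaussianReal 0 1 (Iic t) = ENNReal.ofReal (stdNormCdf t) := by
    rw [stdNormCdf, ENNReal.ofReal_toReal (measure_ne_top _ _)]
  rw [hkey, hrhs]
  by_cases ht : (0:ℝ) ≤ t
  · rw [if_pos ht]
    rw [union_inter_distrib_right]
    have hnull : volume ((Ioo (0:ℝ) 1)ᶜ ∩ Icc 0 1) = 0 := by
      have hsub : (Ioo (0:ℝ) 1)ᶜ ∩ Icc 0 1 ⊆ {(0:ℝ), 1} := by
        rintro p ⟨hpc, hp0, hp1⟩
        simp only [mem_compl_iff, mem_Ioo, not_and, not_lt] at hpc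
        rcases eq_or_lt_of_le hp0 with h | h
        · left; exact h.symm
        · right; exact le_antisymm hp1 (hpc h)
      refine measure_mono_null hsub ?_
      rw [Set.insert_eq]
      exact measure_union_null (by simp [Real.volume_singleton]) (by simp [Real.volume_singleton])
    have hU : volume (Ioc 0 (stdNormCdf t) ∩ Icc 0 1 ∪ (Ioo (0:ℝ) 1)ᶜ ∩ Icc 0 1) =
        volume (Ioc 0 (stdNormCdf t) ∩ Icc (0:ℝ) 1) :=
      le_antisymm ((measure_union_le _ _).trans (by rw [hnull, add_zero]))
        (measure_mono subset_union_left)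
    rw [hU]
    rw [inter_eq_self_of_subset_left (fun p hp =>
      mem_Icc.mpr ⟨(mem_Ioc.mp hp).1.le, (mem_Ioc.mp hp).2.trans hphi.2.le⟩)]
    rw [Real.volume_Ioc]
    simp
  · rw [if_neg ht, union_empty]
    rw [inter_eq_self_of_subset_left (fun p hp =>
      mem_Icc.mpr ⟨(mem_Ioc.mp hp).1.le, (mem_Ioc.mp hp).2.trans hphi.2.le⟩)]
    rw [Real.volume_Ioc]
    simp

end Aux2

section Aux3

open Filter Real

variable {P : Measure Ω} [IsProbabilityMeasure P]

lemma gauss_affine (c μr : ℝ) :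
    Measure.map (fun x => c * x + μr) (gaussianReal 0 1) =
      gaussianReal μr ⟨c^2, sq_nonneg c⟩ := by
  have h1 : (fun x : ℝ => c * x + μr) = (fun x => x + μr) ∘ (fun x => c * x) := rfl
  rw [h1, ← Measure.map_map (by fun_prop) (by fun_prop)]
  have h2 : Measure.map (fun x : ℝ => c * x) (gaussianReal 0 1)
      = gaussianReal 0 ⟨c^2, sq_nonneg c⟩ := by
    rw [show (fun x : ℝ => c * x) = (c * ·) from rfl, gaussianReal_map_const_mul]
    simp only [mul_zero, mul_one]
    rfl
  rw [h2]
  simpa only [zero_add] using gaussianReal_map_add_const (μ := (0:ℝ)) (v := ⟨c^2, sq_nonneg c⟩) μr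

lemma normal_meas_Iic {μr σ : ℝ} (hσ : 0 < σ) (x : ℝ) :
    ((gaussianReal μr ⟨σ^2, sq_nonneg σ⟩) (Iic x)).toReal = stdNormCdf ((x - μr)/σ) := by
  rw [← gauss_affine σ μr, Measure.map_apply (by fun_prop) measurableSet_Iic]
  have hpre : (fun y : ℝ => σ * y + μr) ⁻¹' Iic x = Iic ((x - μr)/σ) := by
    ext y
    simp only [mem_preimage, mem_Iic]
    rw [le_div_iff₀ hσ]
    constructor <;> intro h <;> nlinarith
  rw [hpre]
  rfl

lemma normal_meas_Ioi {μr σ : ℝ} (hσ : 0 < σ) (x : ℝ) :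
    ((gaussianReal μr ⟨σ^2, sq_nonneg σ⟩) (Ioi x)).toReal = 1 - stdNormCdf ((x - μr)/σ) := by
  have hc : (gaussianReal μr ⟨σ^2, sq_nonneg σ⟩) (Ioi x)
      = 1 - (gaussianReal μr ⟨σ^2, sq_nonneg σ⟩) (Iic x) := by
    haveI : IsProbabilityMeasure (gaussianReal μr ⟨σ^2, sq_nonneg σ⟩) :=
      instIsProbabilityMeasureGaussianReal _ _
    have := prob_compl_eq_one_sub (μ := gaussianReal μr ⟨σ^2, sq_nonneg σ⟩)
      (measurableSet_Iic (a := x))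
    rwa [compl_Iic] at this
  haveI : IsProbabilityMeasure (gaussianReal μr ⟨σ^2, sq_nonneg σ⟩) :=
    instIsProbabilityMeasureGaussianReal _ _
  rw [hc, ENNReal.toReal_sub_of_le prob_le_one ENNReal.one_ne_top, normal_meas_Iic hσ]
  simp

lemma rvCdf_normal {X : Ω → ℝ} {μr σ : ℝ} (hσ : 0 < σ) (hm : Measurable X)
    (hmap : Measure.map X P = gaussianReal μr ⟨σ^2, sq_nonneg σ⟩) :
    rvCdf P X = fun x => stdNormCdf ((x - μr)/σ) := by
  funext x
  rw [rvCdf, show {ω | X ω ≤ x} = X ⁻¹' Iic x from rfl,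
    ← Measure.map_apply hm measurableSet_Iic, hmap, normal_meas_Iic hσ]

lemma rvSurv_normal {X : Ω → ℝ} {μr σ : ℝ} (hσ : 0 < σ) (hm : Measurable X)
    (hmap : Measure.map X P = gaussianReal μr ⟨σ^2, sq_nonneg σ⟩) :
    rvSurv P X = fun x => 1 - stdNormCdf ((x - μr)/σ) := by
  funext x
  rw [rvSurv, show {ω | x < X ω} = X ⁻¹' Ioi x from rfl,
    ← Measure.map_apply hm measurableSet_Ioi, hmap, normal_meas_Ioi hσ]

lemma leftInv_normal {X : Ω → ℝ} {μr σ : ℝ} (hσ : 0 < σ) (hm : Measurable X)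
    (hmap : Measure.map X P = gaussianReal μr ⟨σ^2, sq_nonneg σ⟩)
    {p : ℝ} (hp : p ∈ Ioo (0:ℝ) 1) :
    leftInv (rvCdf P X) p = μr + σ * stdNormInv p := by
  rw [rvCdf_normal hσ hm hmap, leftInv]
  have hset : {x | p ≤ stdNormCdf ((x - μr)/σ)} = Ici (μr + σ * stdNormInv p) := by
    ext x
    simp only [mem_setOf_eq, mem_Ici]
    have h1 : p ≤ stdNormCdf ((x - μr)/σ) ↔ stdNormInv p ≤ (x - μr)/σ :=
      (q_le_iff hp _).symm
    rw [h1, le_div_iff₀ hσ]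
    constructor <;> intro h <;> nlinarith
  rw [hset]
  exact csInf_Ici

end Aux3

section Aux4

open Filter Real

set_option linter.unusedSectionVars false

lemma bdd_integrableOn {f : ℝ → ℝ} (hf : Measurable f) (h0 : ∀ x, 0 ≤ f x)
    (h1 : ∀ x, f x ≤ 1) {s : Set ℝ} (hs : volume s ≠ ⊤) : IntegrableOn f s volume :=
  Measure.integrableOn_of_bounded hs hf.aestronglyMeasurable
    (Filter.Eventually.of_forall fun x => by
      rw [Real.norm_eq_abs, abs_le]; exact ⟨by linarith [h0 x], h1 x⟩)

/-- Change of cut point for the `ρ`-type integral expression. -/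
lemma psi_shift {h : ℝ → ℝ} (hmeas : Measurable h) (h0 : ∀ x, 0 ≤ h x) (h1 : ∀ x, h x ≤ 1)
    {a : ℝ} (b : ℝ) (hi1 : IntegrableOn (fun x => 1 - h x) (Iio a) volume)
    (hi2 : IntegrableOn h (Ioi a) volume) :
    (IntegrableOn (fun x => 1 - h x) (Iio b) volume ∧ IntegrableOn h (Ioi b) volume) ∧
    (-(∫ x in Iio b, (1 - h x)) + ∫ x in Ioi b, h x) =
      (-(∫ x in Iio a, (1 - h x)) + ∫ x in Ioi a, h x) - (b - a) := by
  have hmeas1 : Measurable (fun x => 1 - h x) := measurable_const.sub hmeas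
  have h10 : ∀ x, 0 ≤ 1 - h x := fun x => by linarith [h1 x]
  have h11 : ∀ x, 1 - h x ≤ 1 := fun x => by linarith [h0 x]
  -- main step for a ≤ b
  have key : ∀ a b : ℝ, a ≤ b → IntegrableOn (fun x => 1 - h x) (Iio a) volume →
      IntegrableOn h (Ioi a) volume →
      (IntegrableOn (fun x => 1 - h x) (Iio b) volume ∧ IntegrableOn h (Ioi b) volume) ∧
      (-(∫ x in Iio b, (1 - h x)) + ∫ x in Ioi b, h x) =
        (-(∫ x in Iio a, (1 - h x)) + ∫ x in Ioi a, h x) - (b - a) := by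
    intro a b hab hi1 hi2
    have hIco : IntegrableOn (fun x => 1 - h x) (Ico a b) volume :=
      bdd_integrableOn hmeas1 h10 h11 (by simp [Real.volume_Ico])
    have hIoc : IntegrableOn h (Ioc a b) volume :=
      bdd_integrableOn hmeas h0 h1 (by simp [Real.volume_Ioc])
    have hIb1 : IntegrableOn (fun x => 1 - h x) (Iio b) volume := by
      rw [← Iio_union_Ico_eq_Iio hab]
      exact hi1.union hIco
    have hIb2 : IntegrableOn h (Ioi b) volume :=
      hi2.mono_set (Ioi_subset_Ioi hab)
    refine ⟨⟨hIb1, hIb2⟩, ?_⟩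
    have hs1 : ∫ x in Iio b, (1 - h x) =
        (∫ x in Iio a, (1 - h x)) + ∫ x in Ico a b, (1 - h x) := by
      rw [← setIntegral_union (by
          rw [Set.disjoint_left]
          intro x hx hx'
          exact absurd hx'.1 (not_le.mpr hx)) measurableSet_Ico hi1 hIco,
        Iio_union_Ico_eq_Iio hab]
    have hs2 : ∫ x in Ioi a, h x = (∫ x in Ioc a b, h x) + ∫ x in Ioi b, h x := by
      rw [← setIntegral_union (by
          rw [Set.disjoint_left]
          intro x hx hx'
          exact absurd hx' (not_lt.mpr hx.2)) measurableSet_Ioi hIoc hIb2,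
        Ioc_union_Ioi_eq_Ioi hab]
    have hsum : (∫ x in Ico a b, (1 - h x)) + ∫ x in Ioc a b, h x = b - a := by
      rw [integral_Ico_eq_integral_Ioo, integral_Ioc_eq_integral_Ioo]
      have hint1 : IntegrableOn (fun x => 1 - h x) (Ioo a b) volume :=
        hIco.mono_set Ioo_subset_Ico_self
      have hint2 : IntegrableOn h (Ioo a b) volume :=
        hIoc.mono_set Ioo_subset_Ioc_self
      rw [← integral_add hint1 hint2]
      simp only [sub_add_cancel]
      rw [setIntegral_const]
      simp [Real.volume_Ioo, ENNReal.toReal_ofReal (sub_nonneg.mpr hab), hab]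
    rw [hs1, hs2]
    linarith
  rcases le_total a b with hab | hab
  · exact key a b hab hi1 hi2
  · rcases eq_or_lt_of_le hab with rfl | hlt
    · exact ⟨⟨hi1, hi2⟩, by ring⟩
    · have hb1 : IntegrableOn (fun x => 1 - h x) (Iio b) volume :=
        hi1.mono_set (Iio_subset_Iio hab)
      have hb2 : IntegrableOn h (Ioi b) volume := by
        rw [← Ioc_union_Ioi_eq_Ioi hab]
        exact (bdd_integrableOn hmeas h0 h1 (by simp [Real.volume_Ioc])).union hi2
      have := (key b a hab hb1 hb2).2
      exact ⟨⟨hb1, hb2⟩, by linarith⟩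

lemma integrableOn_comp_neg_Ioi {f : ℝ → ℝ} {c : ℝ} :
    IntegrableOn (fun x => f (-x)) (Ioi c) volume ↔ IntegrableOn f (Iio (-c)) volume := by
  have hneg : MeasurePreserving (fun x : ℝ => -x) volume volume :=
    Measure.measurePreserving_neg volume
  have hemb : MeasurableEmbedding (fun x : ℝ => -x) :=
    (Homeomorph.neg ℝ).measurableEmbedding
  have hpre : (fun x : ℝ => -x) ⁻¹' (Iio (-c)) = Ioi c := by
    ext x
    simp only [mem_preimage, mem_Iio, mem_Ioi]
    constructor <;> intro h <;> linarith
  have := hneg.integrableOn_comp_preimage hemb (f := f) (s := Iio (-c))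
  rw [hpre] at this
  exact this

lemma integrableOn_comp_sub {f : ℝ → ℝ} {c t : ℝ} :
    IntegrableOn (fun x => f (x - c)) (Iio t) volume ↔
      IntegrableOn f (Iio (t - c)) volume := by
  have hp : MeasurePreserving (fun x : ℝ => x + (-c)) volume volume :=
    measurePreserving_add_right volume (-c)
  have hemb : MeasurableEmbedding (fun x : ℝ => x + (-c)) :=
    (Homeomorph.addRight (-c)).measurableEmbedding
  have hpre : (fun x : ℝ => x + (-c)) ⁻¹' (Iio (t - c)) = Iio t := by
    ext x
    simp only [mem_preimage, mem_Iio]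
    constructor <;> intro h <;> linarith
  have := hp.integrableOn_comp_preimage hemb (f := f) (s := Iio (t - c))
  rw [hpre] at this
  have hfe : (f ∘ fun x : ℝ => x + -c) = fun x => f (x - c) :=
    funext fun x => by simp [sub_eq_add_neg]
  rw [hfe] at this
  exact this

lemma integrableOn_comp_sub' {f : ℝ → ℝ} {c t : ℝ} :
    IntegrableOn (fun x => f (x - c)) (Ioi t) volume ↔
      IntegrableOn f (Ioi (t - c)) volume := by
  have hp : MeasurePreserving (fun x : ℝ => x + (-c)) volume volume :=
    measurePreserving_add_right volume (-c)
  have hemb : MeasurableEmbedding (fun x : ℝ => x + (-c)) :=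
    (Homeomorph.addRight (-c)).measurableEmbedding
  have hpre : (fun x : ℝ => x + (-c)) ⁻¹' (Ioi (t - c)) = Ioi t := by
    ext x
    simp only [mem_preimage, mem_Ioi]
    constructor <;> intro h <;> linarith
  have := hp.integrableOn_comp_preimage hemb (f := f) (s := Ioi (t - c))
  rw [hpre] at this
  have hfe : (f ∘ fun x : ℝ => x + -c) = fun x => f (x - c) :=
    funext fun x => by simp [sub_eq_add_neg]
  rw [hfe] at this
  exact this

lemma setIntegral_comp_sub (f : ℝ → ℝ) (c t : ℝ) :
    ∫ x in Iio t, f (x - c) = ∫ x in Iio (t - c), f x := by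
  have hp : MeasurePreserving (fun x : ℝ => x + (-c)) volume volume :=
    measurePreserving_add_right volume (-c)
  have hemb : MeasurableEmbedding (fun x : ℝ => x + (-c)) :=
    (Homeomorph.addRight (-c)).measurableEmbedding
  have hpre : (fun x : ℝ => x + (-c)) ⁻¹' (Iio (t - c)) = Iio t := by
    ext x
    simp only [mem_preimage, mem_Iio]
    constructor <;> intro h <;> linarith
  have := hp.setIntegral_preimage_emb hemb f (Iio (t - c))
  rw [hpre] at this
  rw [← this]
  refine setIntegral_congr_fun measurableSet_Iio fun x _ => by
    simp [sub_eq_add_neg]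

lemma setIntegral_comp_sub' (f : ℝ → ℝ) (c t : ℝ) :
    ∫ x in Ioi t, f (x - c) = ∫ x in Ioi (t - c), f x := by
  have hp : MeasurePreserving (fun x : ℝ => x + (-c)) volume volume :=
    measurePreserving_add_right volume (-c)
  have hemb : MeasurableEmbedding (fun x : ℝ => x + (-c)) :=
    (Homeomorph.addRight (-c)).measurableEmbedding
  have hpre : (fun x : ℝ => x + (-c)) ⁻¹' (Ioi (t - c)) = Ioi t := by
    ext x
    simp only [mem_preimage, mem_Ioi]
    constructor <;> intro h <;> linarith
  have := hp.setIntegral_preimage_emb hemb f (Ioi (t - c))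
  rw [hpre] at this
  rw [← this]
  refine setIntegral_congr_fun measurableSet_Ioi fun x _ => by
    simp [sub_eq_add_neg]

end Aux4

section Aux5

open Filter Real

lemma psi_scale {f : ℝ → ℝ} (hmeas : Measurable f) (h0 : ∀ x, 0 ≤ f x) (h1 : ∀ x, f x ≤ 1)
    {σ : ℝ} (hσ : 0 < σ)
    (hi1 : IntegrableOn (fun x => 1 - f (x / σ)) (Iio 0) volume)
    (hi2 : IntegrableOn (fun x => f (x / σ)) (Ioi 0) volume) :
    (IntegrableOn (fun x => 1 - f x) (Iio 0) volume ∧ IntegrableOn f (Ioi 0) volume) ∧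
    (-(∫ x in Iio 0, (1 - f (x / σ))) + ∫ x in Ioi 0, f (x / σ)) =
      σ * (-(∫ x in Iio 0, (1 - f x)) + ∫ x in Ioi 0, f x) := by
  have hdm : (fun x : ℝ => f (x / σ)) = fun x => f (x * σ⁻¹) := by
    funext x; rw [div_eq_mul_inv]
  have hdm1 : (fun x : ℝ => 1 - f (x / σ)) = fun x => 1 - f (x * σ⁻¹) := by
    funext x; rw [div_eq_mul_inv]
  -- Ioi side integrability
  have hint2 : IntegrableOn f (Ioi 0) volume := by
    have h := integrableOn_Ioi_comp_mul_right_iff f 0 (inv_pos.mpr hσ)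
    rw [zero_mul] at h
    exact h.mp (by rw [← hdm]; exact hi2)
  -- Iio side integrability
  have hstepa : IntegrableOn (fun x => 1 - f (-x / σ)) (Ioi 0) volume := by
    have h := integrableOn_comp_neg_Ioi (f := fun x => 1 - f (x / σ)) (c := 0)
    rw [neg_zero] at h
    exact h.mpr hi1
  have hGeq : (fun x : ℝ => 1 - f (-x / σ)) = fun x => (fun y => 1 - f (-y)) (x * σ⁻¹) := by
    funext x
    simp only [neg_div, div_eq_mul_inv, neg_mul]
  have hstepb : IntegrableOn (fun y : ℝ => 1 - f (-y)) (Ioi 0) volume := by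
    have h := integrableOn_Ioi_comp_mul_right_iff (fun y : ℝ => 1 - f (-y)) 0 (inv_pos.mpr hσ)
    rw [zero_mul] at h
    exact h.mp (by rw [← hGeq]; exact hstepa)
  have hint1 : IntegrableOn (fun y : ℝ => 1 - f y) (Iio 0) volume := by
    have h := integrableOn_comp_neg_Ioi (f := fun y : ℝ => 1 - f y) (c := 0)
    rw [neg_zero] at h
    exact h.mp hstepb
  refine ⟨⟨hint1, hint2⟩, ?_⟩
  have e2 : ∫ x in Ioi 0, f (x / σ) = σ * ∫ x in Ioi 0, f x := by
    rw [hdm, integral_comp_mul_right_Ioi f 0 (inv_pos.mpr hσ)]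
    simp [inv_inv, smul_eq_mul]
  have e1 : ∫ x in Iio (0:ℝ), (1 - f (x / σ)) = σ * ∫ x in Iio 0, (1 - f x) := by
    have a1 : ∫ x in Iio (0:ℝ), (1 - f (x / σ)) = ∫ x in Iic (0:ℝ), (1 - f (x / σ)) :=
      (integral_Iic_eq_integral_Iio).symm
    have a2 := integral_comp_neg_Ioi (0:ℝ) (fun x => 1 - f (x / σ))
    rw [neg_zero] at a2
    have a3 : ∫ x in Ioi (0:ℝ), (fun x => 1 - f (x / σ)) (-x) =
        ∫ x in Ioi (0:ℝ), (fun y => 1 - f (-y)) (x * σ⁻¹) := by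
      refine setIntegral_congr_fun measurableSet_Ioi fun x _ => ?_
      simp only [neg_div, div_eq_mul_inv, neg_mul]
    have a4 : ∫ x in Ioi (0:ℝ), (fun y : ℝ => 1 - f (-y)) (x * σ⁻¹) =
        σ * ∫ y in Ioi (0:ℝ), (1 - f (-y)) := by
      rw [integral_comp_mul_right_Ioi (fun y : ℝ => 1 - f (-y)) 0 (inv_pos.mpr hσ)]
      simp [inv_inv, smul_eq_mul]
    have a5 := integral_comp_neg_Ioi (0:ℝ) (fun y : ℝ => 1 - f y)
    rw [neg_zero] at a5
    have a6 : ∫ x in Iic (0:ℝ), (1 - f x) = ∫ x in Iio (0:ℝ), (1 - f x) :=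
      integral_Iic_eq_integral_Iio
    rw [a1, ← a2, a3, a4, a5, a6]
  rw [e1, e2]
  ring

/-- The standard-normal distorted survival function. -/
def Hfun (g : ℝ → ℝ) : ℝ → ℝ := fun x => g (1 - stdNormCdf x)

/-- The distortion risk measure of a standard normal random variable. -/
def stdC (g : ℝ → ℝ) : ℝ :=
  -(∫ x in Iio (0:ℝ), (1 - Hfun g x)) + ∫ x in Ioi (0:ℝ), Hfun g x

def CFin (g : ℝ → ℝ) : Prop :=
  IntegrableOn (fun x => 1 - Hfun g x) (Iio (0:ℝ)) volume ∧
    IntegrableOn (Hfun g) (Ioi (0:ℝ)) volume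

lemma Hfun_mem {g : ℝ → ℝ} (hg : IsDistortion g) (x : ℝ) : Hfun g x ∈ Icc (0:ℝ) 1 :=
  hg.2.2.2 _ ⟨by linarith [Phi_le_one x], by linarith [Phi_nonneg x]⟩

lemma Hfun_antitone {g : ℝ → ℝ} (hg : IsDistortion g) : Antitone (Hfun g) := by
  intro x y hxy
  exact hg.1 ⟨by linarith [Phi_le_one y], by linarith [Phi_nonneg y]⟩
    ⟨by linarith [Phi_le_one x], by linarith [Phi_nonneg x]⟩
    (by have := Phi_mono hxy; simp only [sub_le_sub_iff_left]; linarith)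

lemma Hfun_measurable {g : ℝ → ℝ} (hg : IsDistortion g) : Measurable (Hfun g) :=
  (Hfun_antitone hg).measurable

lemma rho_normal {P : Measure Ω} [IsProbabilityMeasure P] {X : Ω → ℝ} {μr σ : ℝ}
    (hσ : 0 < σ) (hm : Measurable X)
    (hmap : Measure.map X P = gaussianReal μr ⟨σ^2, sq_nonneg σ⟩)
    {g : ℝ → ℝ} (hg : IsDistortion g) (hfin : RhoFinite P g X) :
    rho P g X = μr + σ * stdC g ∧ CFin g := by
  have hsurv := rvSurv_normal hσ hm hmap
  set k : ℝ → ℝ := fun y => Hfun g (y / σ) with hk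
  have hkm : Measurable k := (Hfun_measurable hg).comp (measurable_id.div_const σ)
  have hk0 : ∀ x, 0 ≤ k x := fun x => (Hfun_mem hg _).1
  have hk1 : ∀ x, k x ≤ 1 := fun x => (Hfun_mem hg _).2
  have hfun1 : (fun x => 1 - g (rvSurv P X x)) = fun x => (fun y => 1 - k y) (x - μr) := by
    rw [hsurv]; rfl
  have hfun2 : (fun x => g (rvSurv P X x)) = fun x => k (x - μr) := by
    rw [hsurv]; rfl
  have hfin1 : IntegrableOn (fun y : ℝ => 1 - k y) (Iio (-μr)) volume := by
    have := hfin.1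
    rw [hfun1] at this
    have h := (integrableOn_comp_sub (f := fun y : ℝ => 1 - k y) (c := μr) (t := 0)).mp this
    rwa [zero_sub] at h
  have hfin2 : IntegrableOn k (Ioi (-μr)) volume := by
    have := hfin.2
    rw [hfun2] at this
    have h := (integrableOn_comp_sub' (f := k) (c := μr) (t := 0)).mp this
    rwa [zero_sub] at h
  obtain ⟨⟨hks1, hks2⟩, hshift⟩ :=
    psi_shift hkm hk0 hk1 (a := -μr) 0 hfin1 hfin2
  obtain ⟨hCFin, hscale⟩ := psi_scale (Hfun_measurable hg) (fun x => (Hfun_mem hg x).1)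
    (fun x => (Hfun_mem hg x).2) hσ hks1 hks2
  refine ⟨?_, hCFin⟩
  have hrho : rho P g X = -(∫ x in Iio (-μr), (1 - k x)) + ∫ x in Ioi (-μr), k x := by
    rw [rho]
    have b1 : ∫ x in Iio (0:ℝ), (1 - g (rvSurv P X x)) = ∫ x in Iio (-μr), (1 - k x) := by
      rw [hfun1, setIntegral_comp_sub (fun y => 1 - k y) μr 0, zero_sub]
    have b2 : ∫ x in Ioi (0:ℝ), g (rvSurv P X x) = ∫ x in Ioi (-μr), k x := by
      rw [hfun2, setIntegral_comp_sub' k μr 0, zero_sub]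
    rw [b1, b2]
  rw [hrho]
  have hΨ : -(∫ x in Iio (-μr), (1 - k x)) + ∫ x in Ioi (-μr), k x =
      (-(∫ x in Iio (0:ℝ), (1 - k x)) + ∫ x in Ioi (0:ℝ), k x) + μr := by
    linarith [hshift]
  rw [hΨ]
  have hfin3 : -(∫ x in Iio (0:ℝ), (1 - k x)) + ∫ x in Ioi (0:ℝ), k x = σ * stdC g := by
    rw [stdC]
    exact hscale
  rw [hfin3]
  ring

lemma rho_dirac {P : Measure Ω} [IsProbabilityMeasure P] {X : Ω → ℝ} {M : ℝ}
    (hm : Measurable X) (hmap : Measure.map X P = Measure.dirac M)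
    {g : ℝ → ℝ} (hg : IsDistortion g) :
    rho P g X = M := by
  have hsurv : rvSurv P X = fun x => if x < M then (1:ℝ) else 0 := by
    funext x
    rw [rvSurv, show {ω | x < X ω} = X ⁻¹' Ioi x from rfl,
      ← Measure.map_apply hm measurableSet_Ioi, hmap,
      Measure.dirac_apply' _ measurableSet_Ioi]
    by_cases h : x < M
    · simp [Set.indicator, h]
    · simp [Set.indicator, h]
  have hfun : ∀ x, g (rvSurv P X x) = (Iio M).indicator (fun _ => (1:ℝ)) x := by
    intro x
    rw [hsurv]
    by_cases h : x < M <;> simp [Set.indicator, h, hg.2.1, hg.2.2.1]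
  have hfun1 : ∀ x, 1 - g (rvSurv P X x) = (Ici M).indicator (fun _ => (1:ℝ)) x := by
    intro x
    rw [hfun x]
    by_cases h : x < M
    · simp [Set.indicator, h, not_le.mpr h]
    · simp [Set.indicator, h, not_lt.mp h]
  rw [rho]
  have b1 : ∫ x in Iio (0:ℝ), (1 - g (rvSurv P X x)) =
      ∫ x in Iio (0:ℝ), (Ici M).indicator (fun _ => (1:ℝ)) x :=
    setIntegral_congr_fun measurableSet_Iio fun x _ => hfun1 x
  have b2 : ∫ x in Ioi (0:ℝ), g (rvSurv P X x) =
      ∫ x in Ioi (0:ℝ), (Iio M).indicator (fun _ => (1:ℝ)) x :=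
    setIntegral_congr_fun measurableSet_Ioi fun x _ => hfun x
  rw [b1, b2]
  rw [setIntegral_indicator measurableSet_Ici, setIntegral_indicator measurableSet_Iio]
  rcases le_or_gt 0 M with hM | hM
  · have h1 : Iio (0:ℝ) ∩ Ici M = ∅ := by
      ext x; simp only [mem_inter_iff, mem_Iio, mem_Ici, mem_empty_iff_false, iff_false]
      rintro ⟨hx1, hx2⟩; linarith
    have h2 : Ioi (0:ℝ) ∩ Iio M = Ioo 0 M := rfl
    rw [h1, h2]
    simp only [Measure.restrict_empty, integral_zero_measure, neg_zero, zero_add]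
    rw [setIntegral_const]
    simp [Real.volume_Ioo, ENNReal.toReal_ofReal hM, hM]
  · have h1 : Iio (0:ℝ) ∩ Ici M = Ico M 0 := by
      ext x; simp only [mem_inter_iff, mem_Iio, mem_Ici, mem_Ico]; tauto
    have h2 : Ioi (0:ℝ) ∩ Iio M = ∅ := by
      ext x; simp only [mem_inter_iff, mem_Ioi, mem_Iio, mem_empty_iff_false, iff_false]
      rintro ⟨hx1, hx2⟩; linarith
    rw [h1, h2]
    simp only [Measure.restrict_empty, integral_zero_measure, add_zero]
    rw [setIntegral_const]
    simp only [smul_eq_mul, mul_one, Real.volume_real_Ico]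
    rw [max_eq_left (by linarith)]
    ring

lemma dual_isDistortion {g : ℝ → ℝ} (hg : IsDistortion g) : IsDistortion (dualDistortion g) := by
  obtain ⟨hmono, hg0, hg1, hrange⟩ := hg
  refine ⟨?_, ?_, ?_, ?_⟩
  · intro p hp q hq hpq
    have h1 : (1 - q) ∈ Icc (0:ℝ) 1 := ⟨by linarith [hq.2], by linarith [hq.1]⟩
    have h2 : (1 - p) ∈ Icc (0:ℝ) 1 := ⟨by linarith [hp.2], by linarith [hp.1]⟩
    have := hmono h1 h2 (by linarith)
    simp only [dualDistortion]
    linarith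
  · simp [dualDistortion, hg1]
  · simp [dualDistortion, hg0]
  · intro q hq
    have h1 : (1 - q) ∈ Icc (0:ℝ) 1 := ⟨by linarith [hq.2], by linarith [hq.1]⟩
    have := hrange _ h1
    exact ⟨by simp only [dualDistortion]; linarith [this.2],
      by simp only [dualDistortion]; linarith [this.1]⟩

lemma Hfun_dual {g : ℝ → ℝ} :
    Hfun (dualDistortion g) = fun x => 1 - Hfun g (-x) := by
  funext x
  simp only [Hfun, dualDistortion, Phi_neg]

lemma stdC_dual (g : ℝ → ℝ) : stdC (dualDistortion g) = - stdC g := by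
  rw [stdC, stdC, Hfun_dual]
  have e1 : ∫ x in Ioi (0:ℝ), (1 - Hfun g (-x)) = ∫ x in Iio (0:ℝ), (1 - Hfun g x) := by
    have := integral_comp_neg_Ioi (0:ℝ) (fun y : ℝ => 1 - Hfun g y)
    rw [neg_zero] at this
    rw [this]
    exact integral_Iic_eq_integral_Iio
  have e2 : ∫ x in Iio (0:ℝ), (1 - (1 - Hfun g (-x))) = ∫ x in Ioi (0:ℝ), Hfun g x := by
    have h1 : ∫ x in Iio (0:ℝ), (1 - (1 - Hfun g (-x))) = ∫ x in Iio (0:ℝ), Hfun g (-x) := by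
      refine setIntegral_congr_fun measurableSet_Iio fun x _ => by ring
    rw [h1, ← integral_Iic_eq_integral_Iio]
    have := integral_comp_neg_Iic (0:ℝ) (Hfun g)
    rw [neg_zero] at this
    rw [this]
  rw [e1, e2]
  ring

end Aux5

section Aux6

open Filter Real

lemma map_S {P : Measure Ω} [IsProbabilityMeasure P]
    (m n : ℕ) (X : Fin (m + n) → Ω → ℝ) (μ σ : Fin (m + n) → ℝ)
    (hσ : ∀ i, 0 < σ i) (hX : ∀ i, IsNormalRV P (X i) (μ i) (σ i))
    (U : Ω → ℝ) (hU : IsUniform01 P U)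
    (hjoint : Measure.map (fun ω (i : Fin (m + n)) => X i ω) P =
      Measure.map (fun ω (i : Fin (m + n)) =>
        if (i : ℕ) < m then leftInv (rvCdf P (X i)) (U ω)
        else leftInv (rvCdf P (X i)) (1 - U ω)) P) :
    Measure.map (fun ω => ∑ i, X i ω) P =
      gaussianReal (∑ i, μ i)
        ⟨((∑ i ∈ Finset.univ.filter (fun i : Fin (m + n) => (i : ℕ) < m), σ i) -
          ∑ i ∈ Finset.univ.filter (fun i : Fin (m + n) => ¬ (i : ℕ) < m), σ i)^2,
          sq_nonneg _⟩ := by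
  set A := ∑ i ∈ Finset.univ.filter (fun i : Fin (m + n) => (i : ℕ) < m), σ i with hA
  set B := ∑ i ∈ Finset.univ.filter (fun i : Fin (m + n) => ¬ (i : ℕ) < m), σ i with hB
  obtain ⟨hUm, hUd⟩ := hU
  have haeU : ∀ᵐ ω ∂P, U ω ∈ Ioo (0:ℝ) 1 := by
    have h1 : P (U ⁻¹' (Ioo 0 1)) = 1 := by
      rw [← Measure.map_apply hUm measurableSet_Ioo, hUd,
        Measure.restrict_apply' measurableSet_Icc,
        inter_eq_self_of_subset_left Ioo_subset_Icc_self]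
      simp [Real.volume_Ioo]
    have h2 : P ((U ⁻¹' (Ioo 0 1))ᶜ) = 0 :=
      (prob_compl_eq_zero_iff (hUm measurableSet_Ioo)).mpr h1
    rw [ae_iff]
    exact h2
  have hjm : Measurable (fun ω (i : Fin (m + n)) => X i ω) :=
    measurable_pi_lambda _ fun i => (hX i).1
  have hsummeas : Measurable (fun f : Fin (m + n) → ℝ => ∑ i, f i) :=
    Finset.univ.measurable_sum fun i _ => measurable_pi_apply i
  have hmapS : Measure.map (fun ω => ∑ i, X i ω) P
      = Measure.map (fun f : Fin (m + n) → ℝ => ∑ i, f i)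
        (Measure.map (fun ω (i : Fin (m + n)) => X i ω) P) := by
    rw [Measure.map_map hsummeas hjm]
    rfl
  set J2 : Ω → Fin (m + n) → ℝ := fun ω i =>
    μ i + σ i * (if (i : ℕ) < m then stdNormInv (U ω) else - stdNormInv (U ω)) with hJ2
  have hqU : Measurable (fun ω => stdNormInv (U ω)) := q_measurable.comp hUm
  have hJ2m : Measurable J2 := by
    refine measurable_pi_lambda _ fun i => ?_
    by_cases h : (i : ℕ) < m <;> simp only [hJ2, h, if_true, if_false]
    · exact measurable_const.add (hqU.const_mul _)
    · exact measurable_const.add (hqU.neg.const_mul _)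
  have hae : (fun ω (i : Fin (m + n)) =>
      if (i : ℕ) < m then leftInv (rvCdf P (X i)) (U ω)
      else leftInv (rvCdf P (X i)) (1 - U ω)) =ᵐ[P] J2 := by
    filter_upwards [haeU] with ω hω
    funext i
    by_cases h : (i : ℕ) < m
    · simp only [h, if_true, hJ2]
      rw [leftInv_normal (hσ i) (hX i).1 (hX i).2 hω]
    · simp only [h, if_false, hJ2]
      have hω' : 1 - U ω ∈ Ioo (0:ℝ) 1 := ⟨by linarith [hω.2], by linarith [hω.1]⟩
      rw [leftInv_normal (hσ i) (hX i).1 (hX i).2 hω', q_neg hω]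
  rw [hmapS, hjoint, Measure.map_congr hae, Measure.map_map hsummeas hJ2m]
  have hsum : ((fun f : Fin (m + n) → ℝ => ∑ i, f i) ∘ J2) =
      fun ω => (A - B) * stdNormInv (U ω) + (∑ i, μ i) := by
    funext ω
    simp only [Function.comp_apply, hJ2]
    rw [Finset.sum_add_distrib]
    have hsplit : ∑ i, σ i * (if (i : ℕ) < m then stdNormInv (U ω) else - stdNormInv (U ω))
        = (A - B) * stdNormInv (U ω) := by
      rw [← Finset.sum_filter_add_sum_filter_not Finset.univ (fun i : Fin (m + n) => (i : ℕ) < m)]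
      have c1 : ∑ i ∈ Finset.univ.filter (fun i : Fin (m + n) => (i : ℕ) < m),
          σ i * (if (i : ℕ) < m then stdNormInv (U ω) else - stdNormInv (U ω))
          = A * stdNormInv (U ω) := by
        rw [hA, Finset.sum_mul]
        refine Finset.sum_congr rfl fun i hi => ?_
        rw [if_pos (Finset.mem_filter.mp hi).2]
      have c2 : ∑ i ∈ Finset.univ.filter (fun i : Fin (m + n) => ¬ (i : ℕ) < m),
          σ i * (if (i : ℕ) < m then stdNormInv (U ω) else - stdNormInv (U ω))
          = - (B * stdNormInv (U ω)) := by
        rw [hB, Finset.sum_mul, ← Finset.sum_neg_distrib]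
        refine Finset.sum_congr rfl fun i hi => ?_
        rw [if_neg (Finset.mem_filter.mp hi).2]
        ring
      rw [c1, c2]
      ring
    rw [hsplit]
    ring
  rw [hsum]
  have hcomp : (fun ω => (A - B) * stdNormInv (U ω) + (∑ i, μ i)) =
      (fun x => (A - B) * x + (∑ i, μ i)) ∘ (fun ω => stdNormInv (U ω)) := rfl
  have hmapq : Measure.map (fun ω => stdNormInv (U ω)) P = gaussianReal 0 1 := by
    rw [show (fun ω => stdNormInv (U ω)) = stdNormInv ∘ U from rfl,
      ← Measure.map_map q_measurable hUm, hUd, map_q_uniform]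
  rw [hcomp, ← Measure.map_map (by fun_prop) hqU, hmapq, gauss_affine]

end Aux6

/-- distortion risk measure decomposition for a sum of normal random
variables, the first `m` of which are comonotonic and the last `n` counter-monotonic
to the first block. -/
theorem normal_block_cm_sum_distortion
    (P : Measure Ω) [IsProbabilityMeasure P]
    (m n : ℕ) (X : Fin (m + n) → Ω → ℝ) (μ σ : Fin (m + n) → ℝ)
    (hσ : ∀ i, 0 < σ i) (hX : ∀ i, IsNormalRV P (X i) (μ i) (σ i))
    (U : Ω → ℝ) (hU : IsUniform01 P U)
    (hjoint : Measure.map (fun ω (i : Fin (m + n)) => X i ω) P =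
      Measure.map (fun ω (i : Fin (m + n)) =>
        if (i : ℕ) < m then leftInv (rvCdf P (X i)) (U ω)
        else leftInv (rvCdf P (X i)) (1 - U ω)) P)
    (g : ℝ → ℝ) (hg : IsDistortion g)
    (hfinS : RhoFinite P g (fun ω => ∑ i, X i ω))
    (hfin : ∀ i, RhoFinite P g (X i))
    (hfin' : ∀ i, RhoFinite P (dualDistortion g) (X i)) :
    ((∑ i ∈ Finset.univ.filter (fun i : Fin (m + n) => (i : ℕ) < m), σ i ≥
        ∑ i ∈ Finset.univ.filter (fun i : Fin (m + n) => ¬ (i : ℕ) < m), σ i) →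
      rho P g (fun ω => ∑ i, X i ω) =
        (∑ i ∈ Finset.univ.filter (fun i : Fin (m + n) => (i : ℕ) < m), rho P g (X i)) +
          ∑ i ∈ Finset.univ.filter (fun i : Fin (m + n) => ¬ (i : ℕ) < m),
            rho P (dualDistortion g) (X i)) ∧
    ((∑ i ∈ Finset.univ.filter (fun i : Fin (m + n) => (i : ℕ) < m), σ i <
        ∑ i ∈ Finset.univ.filter (fun i : Fin (m + n) => ¬ (i : ℕ) < m), σ i) →
      rho P g (fun ω => ∑ i, X i ω) =
        (∑ i ∈ Finset.univ.filter (fun i : Fin (m + n) => (i : ℕ) < m),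
            rho P (dualDistortion g) (X i)) +
          ∑ i ∈ Finset.univ.filter (fun i : Fin (m + n) => ¬ (i : ℕ) < m), rho P g (X i)) := by
  classical
  set A := ∑ i ∈ Finset.univ.filter (fun i : Fin (m + n) => (i : ℕ) < m), σ i with hA
  set B := ∑ i ∈ Finset.univ.filter (fun i : Fin (m + n) => ¬ (i : ℕ) < m), σ i with hB
  set M := ∑ i, μ i with hM
  have hmapS := map_S m n X μ σ hσ hX U hU hjoint
  have hSmeas : Measurable (fun ω => ∑ i, X i ω) :=
    Finset.univ.measurable_sum fun i _ => (hX i).1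
  have hrhoXi : ∀ i, rho P g (X i) = μ i + σ i * stdC g := fun i =>
    (rho_normal (hσ i) (hX i).1 (hX i).2 hg (hfin i)).1
  have hrhoXi' : ∀ i, rho P (dualDistortion g) (X i) = μ i - σ i * stdC g := by
    intro i
    have h := (rho_normal (hσ i) (hX i).1 (hX i).2 (dual_isDistortion hg) (hfin' i)).1
    rw [h, stdC_dual]
    ring
  have hMsplit : M = (∑ i ∈ Finset.univ.filter (fun i : Fin (m + n) => (i : ℕ) < m), μ i) +
      ∑ i ∈ Finset.univ.filter (fun i : Fin (m + n) => ¬ (i : ℕ) < m), μ i :=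
    (Finset.sum_filter_add_sum_filter_not _ _ _).symm
  have hsum1 : ∀ C : ℝ,
      (∑ i ∈ Finset.univ.filter (fun i : Fin (m + n) => (i : ℕ) < m), (μ i + σ i * C)) =
        (∑ i ∈ Finset.univ.filter (fun i : Fin (m + n) => (i : ℕ) < m), μ i) + A * C := by
    intro C
    rw [Finset.sum_add_distrib, hA, Finset.sum_mul]
  have hsum2 : ∀ C : ℝ,
      (∑ i ∈ Finset.univ.filter (fun i : Fin (m + n) => ¬ (i : ℕ) < m), (μ i - σ i * C)) =
        (∑ i ∈ Finset.univ.filter (fun i : Fin (m + n) => ¬ (i : ℕ) < m), μ i) - B * C := by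
    intro C
    rw [Finset.sum_sub_distrib, hB, Finset.sum_mul]
  have hsum1' : ∀ C : ℝ,
      (∑ i ∈ Finset.univ.filter (fun i : Fin (m + n) => (i : ℕ) < m), (μ i - σ i * C)) =
        (∑ i ∈ Finset.univ.filter (fun i : Fin (m + n) => (i : ℕ) < m), μ i) - A * C := by
    intro C
    rw [Finset.sum_sub_distrib, hA, Finset.sum_mul]
  have hsum2' : ∀ C : ℝ,
      (∑ i ∈ Finset.univ.filter (fun i : Fin (m + n) => ¬ (i : ℕ) < m), (μ i + σ i * C)) =
        (∑ i ∈ Finset.univ.filter (fun i : Fin (m + n) => ¬ (i : ℕ) < m), μ i) + B * C := by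
    intro C
    rw [Finset.sum_add_distrib, hB, Finset.sum_mul]
  constructor
  · intro hge
    have hBA : B ≤ A := hge
    have hrhoS : rho P g (fun ω => ∑ i, X i ω) = M + (A - B) * stdC g := by
      rcases eq_or_lt_of_le hBA with heq | hlt
      · have hzero : ((⟨(A - B)^2, sq_nonneg _⟩ : NNReal)) = 0 := by
          apply Subtype.ext
          simp [← heq]
        replace hmapS : Measure.map (fun ω => ∑ i, X i ω) P = Measure.dirac M := by
          rw [hmapS, ← gaussianReal_zero_var]
          congr 1
        rw [rho_dirac hSmeas hmapS hg, ← heq]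
        ring
      · have := (rho_normal (μr := M) (σ := A - B) (by linarith) hSmeas hmapS hg hfinS).1
        rw [this]
    rw [hrhoS]
    have e1 : (∑ i ∈ Finset.univ.filter (fun i : Fin (m + n) => (i : ℕ) < m), rho P g (X i)) =
        (∑ i ∈ Finset.univ.filter (fun i : Fin (m + n) => (i : ℕ) < m), μ i) + A * stdC g := by
      rw [← hsum1]
      exact Finset.sum_congr rfl fun i _ => hrhoXi i
    have e2 : (∑ i ∈ Finset.univ.filter (fun i : Fin (m + n) => ¬ (i : ℕ) < m),
        rho P (dualDistortion g) (X i)) =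
        (∑ i ∈ Finset.univ.filter (fun i : Fin (m + n) => ¬ (i : ℕ) < m), μ i) - B * stdC g := by
      rw [← hsum2]
      exact Finset.sum_congr rfl fun i _ => hrhoXi' i
    rw [e1, e2]
    rw [hMsplit]
    ring
  · intro hlt'
    have hAB : A < B := hlt'
    have hrhoS : rho P g (fun ω => ∑ i, X i ω) = M + (B - A) * stdC g := by
      have hvar : ((⟨(A - B)^2, sq_nonneg _⟩ : NNReal)) = ⟨(B - A)^2, sq_nonneg _⟩ :=
        Subtype.ext (by ring)
      rw [hvar] at hmapS
      have := (rho_normal (μr := M) (σ := B - A) (by linarith) hSmeas hmapS hg hfinS).1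
      rw [this]
    rw [hrhoS]
    have e1 : (∑ i ∈ Finset.univ.filter (fun i : Fin (m + n) => (i : ℕ) < m),
        rho P (dualDistortion g) (X i)) =
        (∑ i ∈ Finset.univ.filter (fun i : Fin (m + n) => (i : ℕ) < m), μ i) - A * stdC g := by
      rw [← hsum1']
      exact Finset.sum_congr rfl fun i _ => hrhoXi' i
    have e2 : (∑ i ∈ Finset.univ.filter (fun i : Fin (m + n) => ¬ (i : ℕ) < m), rho P g (X i)) =
        (∑ i ∈ Finset.univ.filter (fun i : Fin (m + n) => ¬ (i : ℕ) < m), μ i) + B * stdC g := by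
      rw [← hsum2']
      exact Finset.sum_congr rfl fun i _ => hrhoXi i
    rw [e1, e2]
    rw [hMsplit]
    ring

end
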